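/- Let Γ be a finite Gorenstein scheme of degree r+s+2 over a field k, let Γ₁ ⊆ Γ be a subscheme and let Γ₂ be the subscheme of Γ residual to Γ₁. Let (V, L) be a linear series on Γ of projective dimension r (i.e. dim_k V = r+1), and let W ⊆ H⁰(K_Γ ⊗ L⁻¹) be its Gale transform. Then the failure of Γ₁ to span ℙ(V) (that is, the codimension of the linear span of the image of Γ₁ in ℙ(V)) is equal to the failure of Γ₂ to impose independent conditions on W (that is, the dimension of the cokernel of the restriction map from W to sections over Γ₂). -/
import Mathlib


/-!
# The Gale transform: the basic principle (Eisenbud–Popescu, Proposition 2.2)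

We model a finite (locally) Gorenstein scheme `Γ` over a field `k` by its (finite-dimensional)
affine coordinate ring `A = H⁰(O_Γ)`: a subscheme `Γ₁ ⊆ Γ` corresponds to an ideal `I ⊆ A`
(with `Γ₁ = Spec (A/I)`), and the residual subscheme `Γ₂` corresponds to the annihilator
ideal `(0 : I)`.

A line bundle on the finite scheme `Γ` is an invertible `A`-module `L` (free of rank one,
since `A` is Artinian), and `H⁰(L) = L`.  By Serre duality for the finite Gorenstein scheme
`Γ`, `H⁰(K_Γ) = Hom_k(A, k)` with trace map `τ = (evaluation at 1)`, and hence
`H⁰(K_Γ ⊗ L⁻¹) = Hom_A(L, Hom_k(A,k)) = Hom_k(L, k) = Dual k L`, in such a way that the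
perfect pairing `H⁰(L) ⊗ H⁰(K_Γ ⊗ L⁻¹) → H⁰(K_Γ) → k` of the Gale-transform construction
becomes the evaluation pairing between `L` and `Dual k L`.  Accordingly, the Gale transform
of a linear series `V ⊆ H⁰(L)` is `V^⊥ = V.dualAnnihilator ⊆ Dual k L`.

The statement: the failure of `Γ₁` to span `ℙ(V)` (the dimension of the kernel of
`V → H⁰(L|_{Γ₁}) = L/IL`, i.e. of `V ⊓ I·L`) equals the failure of `Γ₂` to impose
independent conditions on `W = V^⊥` (the dimension of the cokernel of the restriction map
`W → H⁰((K_Γ ⊗ L⁻¹)|_{Γ₂})`).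
-/

open Module Submodule

/-- A finite scheme `Γ = Spec A` over a field `k` (with `A` a finite-dimensional commutative
`k`-algebra) is *(locally) Gorenstein* iff the `k`-linear dual of `A` is a cyclic `A`-module
for the action `(a • φ) x = φ (a * x)`. -/
def IsGorensteinAlg (k A : Type) [Field k] [CommRing A] [Algebra k A] : Prop :=
  ∃ φ : Module.Dual k A, ∀ ψ : Module.Dual k A, ∃ a : A, ∀ x : A, ψ x = φ (a * x)

section LineBundle

variable (k : Type) [Field k] (A : Type) [CommRing A] [Algebra k A]
variable (L : Type) [AddCommGroup L] [Module k L] [Module A L]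
  [IsScalarTower k A L] [SMulCommClass k A L]

/-- Multiplication by `a : A` on the `A`-module `L`, as a `k`-linear endomorphism. -/
def smulEnd (a : A) : L →ₗ[k] L where
  toFun x := a • x
  map_add' := smul_add a
  map_smul' c x := (smul_comm c a x).symm

/-- The space of sections of (the sheaf associated to) the `A`-module `L` vanishing on the
closed subscheme of `Γ = Spec A` defined by the ideal `I`; i.e. the kernel of the restriction
map `H⁰(L) → H⁰(L|_{Spec (A/I)}) = L/I·L`. -/
def idealSmul (I : Ideal A) : Submodule k L :=
  (I • (⊤ : Submodule A L)).restrictScalars k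

/-- With `H⁰(K_Γ ⊗ L⁻¹)` identified with `Dual k L` (see the module docstring), the
subspace `I • H⁰(K_Γ ⊗ L⁻¹)` of sections vanishing on the subscheme defined by `I`; here
`A` acts on `Dual k L` by `(a • ψ) x = ψ (a • x)`. -/
def idealSmulDual (I : Ideal A) : Submodule k (Module.Dual k L) :=
  Submodule.span k {ψ | ∃ a ∈ I, ∃ φ : Module.Dual k L, ψ = φ ∘ₗ smulEnd k A L a}

end LineBundle


section GaleAux

variable (k : Type) [Field k] (A : Type) [CommRing A] [Algebra k A] [FiniteDimensional k A]
variable (L : Type) [AddCommGroup L] [Module k L] [Module A L]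
  [IsScalarTower k A L] [SMulCommClass k A L]

/-- The `k`-linear isomorphism `A ≃ L` coming from a generator `e` of the rank-one module. -/
noncomputable def galeEquiv (e : L) (he : Function.Bijective fun a : A => a • e) :
    A ≃ₗ[k] L :=
  LinearEquiv.ofBijective
    { toFun := fun a => a • e
      map_add' := fun a b => add_smul a b e
      map_smul' := fun c a => smul_assoc c a e } he

lemma mem_idealSmul_iff (e : L) (he : Function.Bijective fun a : A => a • e) (I : Ideal A)
    (x : L) : x ∈ idealSmul k A L I ↔ ∃ a ∈ I, a • e = x := by
  have htop : (⊤ : Submodule A L) = Submodule.span A {e} := by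
    refine le_antisymm (fun x _ => ?_) le_top
    obtain ⟨a, rfl⟩ := he.2 x
    exact Submodule.smul_mem _ a (Submodule.mem_span_singleton_self e)
  rw [idealSmul, Submodule.restrictScalars_mem, htop, Submodule.mem_smul_span_singleton]

/-- The key identification: in the Gorenstein case, the sections of `K_Γ ⊗ L⁻¹` vanishing on
the residual subscheme `Γ₂` are exactly the functionals annihilating the sections of `L`
vanishing on `Γ₁`. -/
lemma idealSmulDual_annihilator_eq (hGor : IsGorensteinAlg k A)
    (e : L) (he : Function.Bijective fun a : A => a • e) (I : Ideal A) :
    idealSmulDual k A L I.annihilator = (idealSmul k A L I).dualAnnihilator := by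
  obtain ⟨φ, hφ⟩ := hGor
  -- the map `a ↦ φ (a * ·)`, which is bijective by the Gorenstein hypothesis
  set T : A →ₗ[k] Module.Dual k A :=
    { toFun := fun a => φ ∘ₗ smulEnd k A A a
      map_add' := fun a b => by
        ext x; simp [smulEnd, add_mul]
      map_smul' := fun c a => by
        ext x
        show φ ((c • a) • x) = c • φ (a • x)
        rw [smul_assoc, map_smul] } with hT
  have hTapp : ∀ a x, T a x = φ (a * x) := fun a x => rfl
  have hsurj : Function.Surjective T := by
    intro ψ
    obtain ⟨a, ha⟩ := hφ ψ
    exact ⟨a, LinearMap.ext fun x => ((ha x).trans (hTapp a x).symm).symm⟩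
  have hinj : Function.Injective T :=
    (LinearMap.injective_iff_surjective_of_finrank_eq_finrank
      (Subspace.dual_finrank_eq (K := k) (V := A)).symm).2 hsurj
  have hnondeg : ∀ a : A, (∀ x : A, φ (a * x) = 0) → a = 0 := by
    intro a h
    refine hinj (?_ : T a = T 0)
    refine LinearMap.ext fun x => ?_
    rw [hTapp, hTapp, h x, zero_mul, map_zero]
  refine le_antisymm ?_ ?_
  · rw [idealSmulDual]
    refine Submodule.span_le.2 ?_
    rintro ψ ⟨a, ha, φ₀, rfl⟩
    rw [SetLike.mem_coe, Submodule.mem_dualAnnihilator]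
    intro x hx
    obtain ⟨b, hb, rfl⟩ := (mem_idealSmul_iff k A L e he I x).1 hx
    have hab : a * b = 0 := Submodule.mem_annihilator.1 ha b hb
    show φ₀ (a • b • e) = 0
    rw [smul_smul, hab, zero_smul, map_zero]
  · intro ψ hψ
    rw [Submodule.mem_dualAnnihilator] at hψ
    set θ := galeEquiv k A L e he with hθ
    have hθapp : ∀ a : A, θ a = a • e := fun a => rfl
    set χ : Module.Dual k A := ψ ∘ₗ θ.toLinearMap with hχ
    obtain ⟨a, ha⟩ := hφ χ
    have haI : a ∈ I.annihilator := by
      rw [Submodule.mem_annihilator]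
      intro c hc
      refine hnondeg (a • c) fun d => ?_
      have hcd : c * d ∈ I := I.mul_mem_right d hc
      have h0 : χ (c * d) = 0 := by
        refine hψ _ ((mem_idealSmul_iff k A L e he I _).2 ⟨c * d, hcd, rfl⟩)
      calc φ (a • c * d) = φ (a * (c * d)) := by rw [smul_eq_mul, mul_assoc]
        _ = χ (c * d) := (ha (c * d)).symm
        _ = 0 := h0
    refine Submodule.subset_span ⟨a, haI, φ ∘ₗ θ.symm.toLinearMap, ?_⟩
    refine LinearMap.ext fun x => ?_
    obtain ⟨b, rfl⟩ := he.2 x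
    have h1 : ψ (b • e) = φ (a * b) := ha b
    have h2 : smulEnd k A L a (b • e) = θ (a * b) := by
      rw [hθapp]
      show a • b • e = (a * b) • e
      rw [smul_smul]
    show ψ (b • e) = φ (θ.symm (smulEnd k A L a (b • e)))
    rw [h2, θ.symm_apply_apply, h1]

end GaleAux

/-- **The basic principle of the Gale transform** (Proposition 2.2 of Eisenbud–Popescu,
"The projective geometry of the Gale transform").

Let `Γ = Spec A` be a finite Gorenstein scheme of degree `r + s + 2` over a field `k`, let
`Γ₁ ⊆ Γ` be the subscheme defined by an ideal `I`, and let `Γ₂` be the residual subscheme,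
defined by the annihilator ideal of `I`.  Let `(V, L)` be a linear series on `Γ` of projective
dimension `r` (so `dim_k V = r + 1`), and let `W = V^⊥ ⊆ H⁰(K_Γ ⊗ L⁻¹) = Dual k L` be its
Gale transform.  Then the failure of `Γ₁` to span `ℙ(V)`, namely `dim_k (V ⊓ I·L)`, equals the
failure of `Γ₂` to impose independent conditions on `W`, namely the dimension of the cokernel
of the restriction map from `W` to `H⁰((K_Γ ⊗ L⁻¹)|_{Γ₂})`. -/
theorem gale_basic_principle
    (k : Type) [Field k] (A : Type) [CommRing A] [Algebra k A] [FiniteDimensional k A]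
    (hGor : IsGorensteinAlg k A)
    -- `L` is a line bundle on `Γ = Spec A`: an invertible, i.e. free rank-one, `A`-module
    (L : Type) [AddCommGroup L] [Module k L] [Module A L]
    [IsScalarTower k A L] [SMulCommClass k A L]
    (e : L) (he : Function.Bijective fun a : A => a • e)
    (r s : ℕ) (hdeg : Module.finrank k A = r + s + 2)
    -- the linear series `(V, L)` of projective dimension `r`
    (V : Submodule k L) (hV : Module.finrank k ↥V = r + 1) :
    ∀ I : Ideal A,
      -- the failure of `Γ₁ = Spec (A/I)` to span `ℙ(V)` ...
      Module.finrank k ↥(V ⊓ idealSmul k A L I)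
      -- ... equals the failure of the residual subscheme `Γ₂ = Spec (A/(0 : I))` to impose
      -- independent conditions on the Gale transform `W = V^⊥`:
        = Module.finrank k
            ((Module.Dual k L ⧸ idealSmulDual k A L I.annihilator) ⧸
              Submodule.map (idealSmulDual k A L I.annihilator).mkQ V.dualAnnihilator) := by
  intro I
  haveI : FiniteDimensional k L := (galeEquiv k A L e he).finiteDimensional
  set M := idealSmul k A L I with hM
  set W := V.dualAnnihilator with hW
  rw [idealSmulDual_annihilator_eq k A L hGor e he I, ← hM]
  set D := M.dualAnnihilator with hD
  have hquot := LinearEquiv.finrank_eq (R := k)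
    (Submodule.quotientQuotientEquivQuotientSup D W)
  rw [hquot]
  have hda : ∀ U : Submodule k L,
      Module.finrank k ↥U + Module.finrank k ↥U.dualAnnihilator = Module.finrank k L := by
    intro U
    have h := Submodule.finrank_quotient_add_finrank U
    have heq : Module.finrank k (L ⧸ U) = Module.finrank k ↥U.dualAnnihilator :=
      LinearEquiv.finrank_eq (R := k) (Subspace.quotEquivAnnihilator U)
    omega
  have h1 : Module.finrank k (Module.Dual k L ⧸ (D ⊔ W)) + Module.finrank k ↥(D ⊔ W)
      = Module.finrank k L := by
    rw [Submodule.finrank_quotient_add_finrank, Subspace.dual_finrank_eq]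
  have h2 : Module.finrank k ↥(D ⊔ W) + Module.finrank k ↥(D ⊓ W)
      = Module.finrank k ↥D + Module.finrank k ↥W :=
    Submodule.finrank_sup_add_finrank_inf_eq D W
  have h3 : D ⊓ W = (M ⊔ V).dualAnnihilator := (Submodule.dualAnnihilator_sup_eq M V).symm
  have h4 : Module.finrank k ↥M + Module.finrank k ↥D = Module.finrank k L := hda M
  have h5 : Module.finrank k ↥V + Module.finrank k ↥W = Module.finrank k L := hda V
  have h6 := hda (M ⊔ V)
  have h7 : Module.finrank k ↥(M ⊔ V) + Module.finrank k ↥(M ⊓ V)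
      = Module.finrank k ↥M + Module.finrank k ↥V :=
    Submodule.finrank_sup_add_finrank_inf_eq M V
  have h8 : V ⊓ M = M ⊓ V := inf_comm V M
  rw [h3] at h2
  rw [h8]
  omega
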